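/- Let n ≥ 1 and let x, y ∈ Bⁿ. Then s_{Bⁿ}(x,y) ≤ c_{Bⁿ}(x,y)/√(1 + c_{Bⁿ}(x,y)²). -/

import Mathlib

open Metric Set Real RealInnerProductSpace

/-- The triangular ratio metric of `G`. -/
noncomputable def sMet {E : Type*} [MetricSpace E] (G : Set E) (x y : E) : ℝ :=
  sSup ((fun z => dist x y / (dist x z + dist z y)) '' frontier G)

/-- The Cassinian metric of `G`. -/
noncomputable def cMet {E : Type*} [MetricSpace E] (G : Set E) (x y : E) : ℝ :=
  sSup ((fun z => dist x y / (dist x z * dist z y)) '' frontier G)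

/-- The distance ratio metric of `G`. -/
noncomputable def jMet {E : Type*} [MetricSpace E] (G : Set E) (x y : E) : ℝ :=
  Real.log (1 + dist x y / min (infDist x (frontier G)) (infDist y (frontier G)))

set_option maxHeartbeats 1000000 in
lemma key_ineq {E : Type*} [NormedAddCommGroup E] [InnerProductSpace ℝ E]
    (x y z : E) (hx : ‖x‖ ≤ 1) (hy : ‖y‖ ≤ 1) (hz : ‖z‖ = 1) :
    dist x z ^ 2 * dist z y ^ 2 + dist x y ^ 2 ≤ (dist x z + dist z y) ^ 2 := by
  set p := x - z with hp
  set q := y - z with hq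
  have hdxz : dist x z = ‖p‖ := dist_eq_norm x z
  have hdzy : dist z y = ‖q‖ := by rw [dist_comm]; exact dist_eq_norm y z
  have hdxy : dist x y = ‖p - q‖ := by
    rw [dist_eq_norm]; congr 1; simp [hp, hq]
  rw [hdxz, hdzy, hdxy]
  set P : ℝ := ⟪p, -z⟫ with hPdef
  set Q : ℝ := ⟪q, -z⟫ with hQdef
  have hzz : ⟪z, z⟫ = (1:ℝ) := by
    rw [real_inner_self_eq_norm_sq, hz]; norm_num
  have hpz : ⟪p, z⟫ = -P := by simp [hPdef]
  have hqz : ⟪q, z⟫ = -Q := by simp [hQdef]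
  have hzp : ⟪z, p⟫ = -P := by rw [real_inner_comm]; exact hpz
  have hzq : ⟪z, q⟫ = -Q := by rw [real_inner_comm]; exact hqz
  have hP : ‖p‖ ^ 2 ≤ 2 * P := by
    have h1 : ‖p‖ ^ 2 = ‖x‖^2 - 2*⟪x,z⟫ + ‖z‖^2 := norm_sub_sq_real x z
    have h2 : P = ⟪z,z⟫ - ⟪x,z⟫ := by
      simp [hPdef, hp, inner_sub_left, inner_neg_right, real_inner_comm z x]
    rw [h1, h2, hzz, hz]
    nlinarith [norm_nonneg x, hx]
  have hQ : ‖q‖ ^ 2 ≤ 2 * Q := by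
    have h1 : ‖q‖ ^ 2 = ‖y‖^2 - 2*⟪y,z⟫ + ‖z‖^2 := norm_sub_sq_real y z
    have h2 : Q = ⟪z,z⟫ - ⟪y,z⟫ := by
      simp [hQdef, hq, inner_sub_left, inner_neg_right, real_inner_comm z y]
    rw [h1, h2, hzz, hz]
    nlinarith [norm_nonneg y, hy]
  have hP0 : 0 ≤ P := by nlinarith [sq_nonneg ‖p‖]
  have hQ0 : 0 ≤ Q := by nlinarith [sq_nonneg ‖q‖]
  set pp := p + P • z with hppdef
  set qq := q + Q • z with hqqdef
  have hnp : ‖pp‖ ^ 2 = ‖p‖^2 - P^2 := by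
    rw [← real_inner_self_eq_norm_sq, ← real_inner_self_eq_norm_sq]
    simp [-inner_self_eq_norm_sq_to_K, hppdef, inner_add_left, inner_add_right, inner_smul_left, inner_smul_right,
      hzz, hpz, hzp]
    ring
  have hnq : ‖qq‖ ^ 2 = ‖q‖^2 - Q^2 := by
    rw [← real_inner_self_eq_norm_sq, ← real_inner_self_eq_norm_sq]
    simp [-inner_self_eq_norm_sq_to_K, hqqdef, inner_add_left, inner_add_right, inner_smul_left, inner_smul_right,
      hzz, hqz, hzq]
    ring
  have hpq : ⟪p, q⟫ = P*Q + ⟪pp, qq⟫ := by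
    simp [-inner_self_eq_norm_sq_to_K, hppdef, hqqdef, inner_add_left, inner_add_right, inner_smul_left, inner_smul_right,
      hzz, hpz, hqz, hzp, hzq]
  have hCS : ⟪pp, qq⟫^2 ≤ (‖p‖^2 - P^2) * (‖q‖^2 - Q^2) := by
    rw [← hnp, ← hnq]
    calc ⟪pp, qq⟫^2 ≤ (‖pp‖*‖qq‖)^2 := by
          have h := abs_real_inner_le_norm pp qq
          nlinarith [abs_nonneg ⟪pp, qq⟫, sq_abs ⟪pp, qq⟫]
      _ = ‖pp‖^2 * ‖qq‖^2 := by ring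
  have hPa : P ≤ ‖p‖ := by
    rw [hPdef]
    calc ⟪p, -z⟫ ≤ ‖p‖ * ‖-z‖ := real_inner_le_norm p (-z)
      _ = ‖p‖ := by rw [norm_neg, hz, mul_one]
  have hQb : Q ≤ ‖q‖ := by
    rw [hQdef]
    calc ⟪q, -z⟫ ≤ ‖q‖ * ‖-z‖ := real_inner_le_norm q (-z)
      _ = ‖q‖ := by rw [norm_neg, hz, mul_one]
  have habPQ : P*Q ≤ ‖p‖*‖q‖ := mul_le_mul hPa hQb hQ0 (norm_nonneg p)
  have h1 : ⟪pp,qq⟫^2 ≤ (‖p‖*‖q‖ - P*Q)^2 := by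
    nlinarith [hCS, sq_nonneg (‖p‖*Q - ‖q‖*P)]
  have key : -(‖p‖*‖q‖ - P*Q) ≤ ⟪pp,qq⟫ := by
    nlinarith [h1, habPQ, sq_nonneg (⟪pp,qq⟫ + (‖p‖*‖q‖ - P*Q))]
  have h4PQ : ‖p‖^2*‖q‖^2 ≤ 4*(P*Q) :=
    calc ‖p‖^2*‖q‖^2 ≤ (2*P)*(2*Q) :=
          mul_le_mul hP hQ (sq_nonneg ‖q‖) (by linarith)
      _ = 4*(P*Q) := by ring
  have hnormsub : ‖p - q‖^2 = ‖p‖^2 - 2*⟪p,q⟫ + ‖q‖^2 := norm_sub_sq_real p q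
  nlinarith [h4PQ, key, hpq, hnormsub]

set_option maxHeartbeats 1000000 in
/-- For `x, y ∈ Bⁿ`, `s_{Bⁿ}(x,y) ≤ c_{Bⁿ}(x,y)/√(1 + c_{Bⁿ}(x,y)²)`. -/
theorem sMet_le_cMet_div_sqrt (n : ℕ) (hn : 1 ≤ n) (x y : EuclideanSpace ℝ (Fin n))
    (hx : x ∈ Metric.ball (0 : EuclideanSpace ℝ (Fin n)) 1)
    (hy : y ∈ Metric.ball (0 : EuclideanSpace ℝ (Fin n)) 1) :
    sMet (Metric.ball (0 : EuclideanSpace ℝ (Fin n)) 1) x y ≤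
      cMet (Metric.ball (0 : EuclideanSpace ℝ (Fin n)) 1) x y /
        Real.sqrt (1 + cMet (Metric.ball (0 : EuclideanSpace ℝ (Fin n)) 1) x y ^ 2) := by
  have hF : frontier (Metric.ball (0 : EuclideanSpace ℝ (Fin n)) 1) = Metric.sphere 0 1 :=
    frontier_ball 0 one_ne_zero
  have hx1 : ‖x‖ < 1 := mem_ball_zero_iff.mp hx
  have hy1 : ‖y‖ < 1 := mem_ball_zero_iff.mp hy
  simp only [sMet, cMet, hF]
  set d := dist x y with hd
  set S : Set (EuclideanSpace ℝ (Fin n)) := Metric.sphere 0 1 with hS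
  -- sphere is nonempty
  have hz₀ : (EuclideanSpace.single (⟨0, hn⟩ : Fin n) (1:ℝ)) ∈ S := by
    rw [hS, mem_sphere_zero_iff_norm, EuclideanSpace.norm_single]; norm_num
  have hSne : S.Nonempty := ⟨_, hz₀⟩
  -- distance bounds for boundary points
  have hax : ∀ z ∈ S, 1 - ‖x‖ ≤ dist x z := by
    intro z hz
    rw [hS, mem_sphere_zero_iff_norm] at hz
    calc 1 - ‖x‖ = ‖z‖ - ‖x‖ := by rw [hz]
      _ ≤ ‖z - x‖ := norm_sub_norm_le z x
      _ = dist x z := by rw [dist_eq_norm, norm_sub_rev]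
  have hby : ∀ z ∈ S, 1 - ‖y‖ ≤ dist z y := by
    intro z hz
    rw [hS, mem_sphere_zero_iff_norm] at hz
    calc 1 - ‖y‖ = ‖z‖ - ‖y‖ := by rw [hz]
      _ ≤ ‖z - y‖ := norm_sub_norm_le z y
      _ = dist z y := (dist_eq_norm z y).symm
  have hεx : (0:ℝ) < 1 - ‖x‖ := by linarith
  have hεy : (0:ℝ) < 1 - ‖y‖ := by linarith
  -- the Cassinian image is bounded above
  have hbdd : BddAbove ((fun z => d / (dist x z * dist z y)) '' S) := by
    refine ⟨d / ((1 - ‖x‖) * (1 - ‖y‖)), ?_⟩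
    rintro w ⟨z, hz, rfl⟩
    have h1 := hax z hz
    have h2 := hby z hz
    show d / (dist x z * dist z y) ≤ d / ((1 - ‖x‖) * (1 - ‖y‖))
    gcongr
  set C : ℝ := sSup ((fun z => d / (dist x z * dist z y)) '' S) with hC
  have hC0 : 0 ≤ C := by
    have hmem : d / (dist x (EuclideanSpace.single (⟨0, hn⟩ : Fin n) (1:ℝ)) *
        dist (EuclideanSpace.single (⟨0, hn⟩ : Fin n) (1:ℝ)) y) ∈
        (fun z => d / (dist x z * dist z y)) '' S := ⟨_, hz₀, rfl⟩
    have hle := le_csSup hbdd hmem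
    have : (0:ℝ) ≤ d / (dist x (EuclideanSpace.single (⟨0, hn⟩ : Fin n) (1:ℝ)) *
        dist (EuclideanSpace.single (⟨0, hn⟩ : Fin n) (1:ℝ)) y) := by positivity
    linarith
  have hsqrtpos : (0:ℝ) < Real.sqrt (1 + C ^ 2) := Real.sqrt_pos.mpr (by positivity)
  refine csSup_le (hSne.image _) ?_
  rintro w ⟨z, hz, rfl⟩
  have hz1 : ‖z‖ = 1 := by rwa [hS, mem_sphere_zero_iff_norm] at hz
  have ha := hax z hz
  have hb := hby z hz
  have hapos : 0 < dist x z := lt_of_lt_of_le hεx ha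
  have hbpos : 0 < dist z y := lt_of_lt_of_le hεy hb
  set a := dist x z with hadef
  set b := dist z y with hbdef
  -- d ≤ C * (a * b)
  have hdC : d ≤ C * (a * b) := by
    have hle : d / (a * b) ≤ C := le_csSup hbdd ⟨z, hz, rfl⟩
    rwa [div_le_iff₀ (by positivity)] at hle
  -- key geometric inequality
  have hkey : a ^ 2 * b ^ 2 + d ^ 2 ≤ (a + b) ^ 2 :=
    key_ineq x y z hx1.le hy1.le hz1
  -- conclude
  rw [div_le_div_iff₀ (by positivity) hsqrtpos]
  have hd2 : d ^ 2 ≤ C ^ 2 * (a * b) ^ 2 := by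
    have := pow_le_pow_left₀ dist_nonneg hdC 2
    calc d ^ 2 ≤ (C * (a * b)) ^ 2 := this
      _ = C ^ 2 * (a * b) ^ 2 := by ring
  have hsq : (d * Real.sqrt (1 + C ^ 2)) ^ 2 ≤ (C * (a + b)) ^ 2 := by
    rw [mul_pow, mul_pow, Real.sq_sqrt (by positivity)]
    nlinarith [hd2, hkey, sq_nonneg C]
  have h2 := Real.sqrt_le_sqrt hsq
  rw [Real.sqrt_sq (by positivity), Real.sqrt_sq (mul_nonneg hC0 (by positivity))] at h2
  exact h2
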